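/- If μ is a greedy-optimal matching schedule for additive valuations with item values in [0,1], then the output allocation of μ is envy-freeable. -/

import Mathlib

open Finset

/-- Walk weight: sum of edge weights along `c 0, c 1, ..., c ℓ`. -/
private def Wt {n : ℕ} (w : Fin n → Fin n → ℝ) (c : ℕ → Fin n) (ℓ : ℕ) : ℝ :=
  ∑ j ∈ Finset.range ℓ, w (c j) (c (j + 1))

private lemma Wt_split {n : ℕ} (w : Fin n → Fin n → ℝ) (c : ℕ → Fin n)
    (a d e : ℕ) (hc : c a = c (a + d)) :
    Wt w c (a + d + e) =
      Wt w (fun j => c (a + j)) d +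
      Wt w (fun j => if j ≤ a then c j else c (j + d)) (a + e) := by
  unfold Wt
  rw [Finset.sum_range_add, Finset.sum_range_add, Finset.sum_range_add]
  have h1 : ∀ j ∈ Finset.range a,
      w (if j ≤ a then c j else c (j + d))
        (if j + 1 ≤ a then c (j + 1) else c (j + 1 + d)) = w (c j) (c (j + 1)) := by
    intro j hj
    simp only [Finset.mem_range] at hj
    rw [if_pos (by omega : j ≤ a), if_pos (by omega : j + 1 ≤ a)]
  have h2 : ∀ j ∈ Finset.range d,
      w (c (a + j)) (c (a + (j + 1))) = w (c (a + j)) (c (a + j + 1)) := by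
    intro j _
    have : a + (j + 1) = a + j + 1 := by omega
    rw [this]
  have h3 : ∀ j ∈ Finset.range e,
      w (if a + j ≤ a then c (a + j) else c (a + j + d))
        (if a + j + 1 ≤ a then c (a + j + 1) else c (a + j + 1 + d)) =
      w (c (a + d + j)) (c (a + d + j + 1)) := by
    intro j _
    rw [if_neg (by omega : ¬ (a + j + 1 ≤ a))]
    rcases Nat.eq_zero_or_pos j with rfl | hj
    · rw [if_pos (by omega : a + 0 ≤ a)]
      have e1 : a + 0 = a := by omega
      have e2 : a + 0 + 1 + d = a + d + 0 + 1 := by omega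
      have e3 : a + d = a + d + 0 := by omega
      rw [e1, e2, hc, e3]
    · rw [if_neg (by omega : ¬ (a + j ≤ a))]
      have e1 : a + j + d = a + d + j := by omega
      have e2 : a + j + 1 + d = a + d + j + 1 := by omega
      rw [e1, e2]
  rw [Finset.sum_congr rfl (fun j hj => h1 j hj), Finset.sum_congr rfl (fun j hj => h2 j hj),
    Finset.sum_congr rfl (fun j hj => h3 j hj)]
  ring

/-- Closed walks have nonpositive weight when every permutation reassignment is nonpositive. -/
private lemma closed_walk_nonpos {n : ℕ} (w : Fin n → Fin n → ℝ)
    (hw0 : ∀ i, w i i = 0)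
    (hperm : ∀ π : Equiv.Perm (Fin n), ∑ i, w i (π i) ≤ 0) :
    ∀ ℓ : ℕ, ∀ c : ℕ → Fin n, c ℓ = c 0 → Wt w c ℓ ≤ 0 := by
  intro ℓ
  induction ℓ using Nat.strong_induction_on with
  | _ ℓ IH =>
    intro c hclose
    by_cases hinj : ∀ a ∈ Finset.range ℓ, ∀ b ∈ Finset.range ℓ, c a = c b → a = b
    · -- injective case: the walk is a cycle, use formPerm
      set l : List (Fin n) := (List.range ℓ).map c with hl
      have hlen : l.length = ℓ := by simp [hl]
      have hnd : l.Nodup := by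
        apply List.Nodup.map_on _ List.nodup_range
        intro a ha b hb hab
        exact hinj a (by simpa using ha) b (by simpa using hb) hab
      have hkey := hperm l.formPerm
      have hout : ∑ i, w i (l.formPerm i) = ∑ i ∈ l.toFinset, w i (l.formPerm i) := by
        refine (Finset.sum_subset (Finset.subset_univ _) ?_).symm
        intro x _ hx
        rw [List.formPerm_apply_of_notMem (by simpa using hx), hw0]
      have htf : l.toFinset = (Finset.range ℓ).image c := by
        ext x
        simp [hl]
      have himg : ∑ i ∈ (Finset.range ℓ).image c, w i (l.formPerm i)
          = ∑ j ∈ Finset.range ℓ, w (c j) (l.formPerm (c j)) := by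
        refine Finset.sum_image ?_
        intro a ha b hb hab; exact hinj a ha b hb hab
      have hstep : ∀ j ∈ Finset.range ℓ, w (c j) (l.formPerm (c j)) = w (c j) (c (j + 1)) := by
        intro j hj
        simp only [Finset.mem_range] at hj
        have hjl : j < l.length := by omega
        have hgl : l[j] = c j := by simp [hl]
        have hfp := List.formPerm_apply_getElem l hnd j hjl
        rw [hgl] at hfp
        rw [hfp]
        have hgl2 : l[(j+1) % l.length]'(Nat.mod_lt _ (by omega)) = c ((j+1) % ℓ) := by
          simp [hl, hlen]
        rw [hgl2]
        rcases Nat.lt_or_ge (j+1) ℓ with h | h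
        · rw [Nat.mod_eq_of_lt h]
        · have hje : j + 1 = ℓ := by omega
          rw [hje, Nat.mod_self, ← hje, hclose.symm, hje]
      calc Wt w c ℓ = ∑ j ∈ Finset.range ℓ, w (c j) (l.formPerm (c j)) :=
              (Finset.sum_congr rfl hstep).symm
        _ = ∑ i, w i (l.formPerm i) := by rw [hout, htf, himg]
        _ ≤ 0 := hkey
    · -- a repeated vertex strictly inside: cut the walk
      push_neg at hinj
      obtain ⟨a, ha, b, hb, hab, hne⟩ := hinj
      simp only [Finset.mem_range] at ha hb
      obtain ⟨a, b, hab', hlt, hbl⟩ : ∃ a b : ℕ, c a = c b ∧ a < b ∧ b < ℓ := by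
        rcases Nat.lt_or_ge a b with h | h
        · exact ⟨a, b, hab, h, hb⟩
        · exact ⟨b, a, hab.symm, by omega, ha⟩
      set d := b - a with hd
      set e := ℓ - b with he
      have hℓ : ℓ = a + d + e := by omega
      have hc : c a = c (a + d) := by rw [show a + d = b by omega]; exact hab'
      have hsplit := Wt_split w c a d e hc
      rw [← hℓ] at hsplit
      have h1 : Wt w (fun j => c (a + j)) d ≤ 0 := by
        apply IH d (by omega)
        show c (a + d) = c (a + 0)
        rw [Nat.add_zero]
        exact hc.symm
      have h2 : Wt w (fun j => if j ≤ a then c j else c (j + d)) (a + e) ≤ 0 := by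
        apply IH (a + e) (by omega)
        show (if a + e ≤ a then c (a + e) else c (a + e + d)) =
          (if 0 ≤ a then c 0 else c (0 + d))
        rw [if_neg (by omega : ¬ (a + e ≤ a)), if_pos (Nat.zero_le _)]
        rw [show a + e + d = ℓ by omega]
        exact hclose
      linarith

private def extF (n : ℕ) (g : Fin (n + 1) → Fin n) : ℕ → Fin n :=
  fun j => g ⟨min j n, Nat.lt_succ_of_le (Nat.min_le_right j n)⟩

private def weightF (n : ℕ) (w : Fin n → Fin n → ℝ) (g : Fin (n + 1) → Fin n) : ℝ :=
  Wt w (extF n g) n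

private lemma extF_eq (n : ℕ) (g : Fin (n + 1) → Fin n) (j : ℕ) (hj : j ≤ n) :
    extF n g j = g ⟨j, by omega⟩ := by
  unfold extF
  congr 1
  exact Fin.ext (by simp [Nat.min_eq_left hj])

/-- Existence of potentials (payments) given nonpositive permutation reassignments. -/
private lemma potential_exists {n : ℕ} (hn : 1 ≤ n) (w : Fin n → Fin n → ℝ)
    (hw0 : ∀ i, w i i = 0)
    (hperm : ∀ π : Equiv.Perm (Fin n), ∑ i, w i (π i) ≤ 0) :
    ∃ p : Fin n → ℝ, (∀ i, 0 ≤ p i) ∧ ∀ i k, w i k ≤ p i - p k := by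
  have hclosed := closed_walk_nonpos w hw0 hperm
  have hne : ∀ i : Fin n, (Finset.univ.filter (fun g : Fin (n + 1) → Fin n => g 0 = i)).Nonempty :=
    fun i => ⟨fun _ => i, by simp⟩
  refine ⟨fun i => (Finset.univ.filter (fun g : Fin (n + 1) → Fin n => g 0 = i)).sup'
    (hne i) (weightF n w), ?_, ?_⟩
  · intro i
    have hmem : (fun _ => i : Fin (n+1) → Fin n) ∈
        Finset.univ.filter (fun g : Fin (n + 1) → Fin n => g 0 = i) := by simp
    have hle := Finset.le_sup' (weightF n w) hmem
    have hzero : weightF n w (fun _ => i) = 0 := by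
      unfold weightF Wt extF
      simp [hw0]
    rw [hzero] at hle
    exact hle
  · intro i k
    obtain ⟨g, hg, hgw⟩ := Finset.exists_mem_eq_sup' (hne k) (weightF n w)
    simp only [Finset.mem_filter] at hg
    have hg0 : g 0 = k := hg.2
    -- pigeonhole: a repeated vertex along the walk `extF n g`
    obtain ⟨x, y, hxy, hgxy⟩ := Fintype.exists_ne_map_eq_of_card_lt g (by simp)
    obtain ⟨a, b, hab', hlt, hbn⟩ : ∃ a b : ℕ, extF n g a = extF n g b ∧ a < b ∧ b ≤ n := by
      rcases Nat.lt_or_ge (x : ℕ) (y : ℕ) with h | h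
      · refine ⟨x, y, ?_, h, by omega⟩
        rw [extF_eq n g x (by omega), extF_eq n g y (by omega)]
        simpa [Fin.ext_iff] using hgxy
      · have h' : (y : ℕ) < (x : ℕ) := by
          rcases Nat.lt_or_ge (y : ℕ) (x : ℕ) with h2 | h2
          · exact h2
          · exact absurd (Fin.ext (by omega)) hxy
        refine ⟨y, x, ?_, h', by omega⟩
        rw [extF_eq n g x (by omega), extF_eq n g y (by omega)]
        simpa [Fin.ext_iff] using hgxy.symm
    set c : ℕ → Fin n := extF n g with hcdef
    set d := b - a with hdd
    set e := n - b with hee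
    have hnℓ : n = a + d + e := by omega
    have hc : c a = c (a + d) := by rw [show a + d = b by omega]; exact hab'
    set c2 : ℕ → Fin n := fun j => if j ≤ a then c j else c (j + d) with hc2
    have hsplit := Wt_split w c a d e hc
    rw [← hnℓ] at hsplit
    have hclosed1 : Wt w (fun j => c (a + j)) d ≤ 0 := by
      apply hclosed
      show c (a + d) = c (a + 0)
      rw [Nat.add_zero]
      exact hc.symm
    set ℓ2 := a + e with hℓ2
    have hwc2 : Wt w c n ≤ Wt w c2 ℓ2 := by
      have heq : Wt w c2 ℓ2 = Wt w c n - Wt w (fun j => c (a + j)) d := by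
        rw [hsplit]; ring
      rw [heq]; linarith
    have hc2zero : c2 0 = k := by
      show (if 0 ≤ a then c 0 else c (0 + d)) = k
      rw [if_pos (Nat.zero_le a)]
      rw [hcdef, extF_eq n g 0 (by omega)]
      simpa using hg0
    have hℓ2n : ℓ2 + 1 ≤ n := by omega
    -- prepend i to the shortened walk and pad
    set h : ℕ → Fin n := fun j => if j = 0 then i else c2 (min (j - 1) ℓ2) with hh
    set g' : Fin (n + 1) → Fin n := fun x => h x.val with hg'
    have hg'mem : g' ∈ Finset.univ.filter (fun g : Fin (n + 1) → Fin n => g 0 = i) := by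
      simp only [Finset.mem_filter, Finset.mem_univ, true_and]
      show h (0 : Fin (n+1)).val = i
      simp [hh]
    have hextg' : ∀ j ≤ n, extF n g' j = h j := by
      intro j hj
      rw [extF_eq n g' j hj]
    have hwg' : weightF n w g' = w i k + Wt w c2 ℓ2 := by
      have hr : n = (1 + ℓ2) + (n - 1 - ℓ2) := by omega
      unfold weightF
      have hWeq : Wt w (extF n g') n = Wt w h n := by
        unfold Wt
        apply Finset.sum_congr rfl
        intro j hj
        simp only [Finset.mem_range] at hj
        rw [hextg' j (by omega), hextg' (j+1) (by omega)]
      rw [hWeq]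
      unfold Wt
      rw [hr, Finset.sum_range_add, Finset.sum_range_add]
      have e0 : ∑ j ∈ Finset.range 1, w (h j) (h (j + 1)) = w i k := by
        rw [Finset.sum_range_one]
        show w (if (0:ℕ) = 0 then i else c2 (min (0 - 1) ℓ2))
          (if (0:ℕ) + 1 = 0 then i else c2 (min (0 + 1 - 1) ℓ2)) = w i k
        rw [if_pos rfl, if_neg (by omega : ¬ ((0:ℕ) + 1 = 0))]
        have : min ((0:ℕ) + 1 - 1) ℓ2 = 0 := by omega
        rw [this, hc2zero]
      have e1 : ∑ j ∈ Finset.range ℓ2, w (h (1 + j)) (h (1 + j + 1)) =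
          ∑ j ∈ Finset.range ℓ2, w (c2 j) (c2 (j + 1)) := by
        apply Finset.sum_congr rfl
        intro j hj
        simp only [Finset.mem_range] at hj
        show w (if 1 + j = 0 then i else c2 (min (1 + j - 1) ℓ2))
          (if 1 + j + 1 = 0 then i else c2 (min (1 + j + 1 - 1) ℓ2)) = w (c2 j) (c2 (j + 1))
        rw [if_neg (by omega : ¬ (1 + j = 0)), if_neg (by omega : ¬ (1 + j + 1 = 0))]
        rw [show min (1 + j - 1) ℓ2 = j by omega, show min (1 + j + 1 - 1) ℓ2 = j + 1 by omega]
      have e2 : ∑ j ∈ Finset.range (n - 1 - ℓ2), w (h (1 + ℓ2 + j)) (h (1 + ℓ2 + j + 1)) = 0 := by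
        apply Finset.sum_eq_zero
        intro j _
        show w (if 1 + ℓ2 + j = 0 then i else c2 (min (1 + ℓ2 + j - 1) ℓ2))
          (if 1 + ℓ2 + j + 1 = 0 then i else c2 (min (1 + ℓ2 + j + 1 - 1) ℓ2)) = 0
        rw [if_neg (by omega : ¬ (1 + ℓ2 + j = 0)), if_neg (by omega : ¬ (1 + ℓ2 + j + 1 = 0))]
        rw [show min (1 + ℓ2 + j - 1) ℓ2 = ℓ2 by omega,
          show min (1 + ℓ2 + j + 1 - 1) ℓ2 = ℓ2 by omega]
        exact hw0 _
      rw [e0, e1, e2]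
      ring
    have hple := Finset.le_sup' (weightF n w) hg'mem
    rw [hwg'] at hple
    have hpk : (Finset.univ.filter (fun g : Fin (n + 1) → Fin n => g 0 = k)).sup'
        (hne k) (weightF n w) = Wt w c n := by
      rw [hgw]
      rfl
    beta_reduce
    rw [hpk]
    linarith

theorem greedy_schedule_envy_freeable
    (n T m : ℕ) (hn : 1 ≤ n) (hT : 1 ≤ T) (hm : m = n * T)
    (v : Fin n → Fin m → ℝ)
    (hv0 : ∀ i j, 0 ≤ v i j) (hv1 : ∀ i j, v i j ≤ 1)
    (μ : Fin T → Fin n → Fin m)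
    (hμ : Function.Bijective (fun q : Fin T × Fin n => μ q.1 q.2))
    (hgreedy : ∀ t : Fin T, ∀ σ : Fin n → Fin m, Function.Injective σ →
      (∀ i, σ i ∈ Finset.univ.filter
        (fun j => ∀ s : Fin T, (s : ℕ) < (t : ℕ) → ∀ i' : Fin n, μ s i' ≠ j)) →
      (∑ i, v i (σ i)) ≤ ∑ i, v i (μ t i)) :
    ∃ p : Fin n → ℝ, (∀ i, 0 ≤ p i) ∧
      ∀ i k : Fin n,
        (∑ j ∈ Finset.univ.image (fun t => μ t i), v i j) + p i ≥
        (∑ j ∈ Finset.univ.image (fun t => μ t k), v i j) + p k := by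
  set B : Fin n → Fin n → ℝ := fun i k => ∑ j ∈ Finset.univ.image (fun t => μ t k), v i j with hB
  have hBsum : ∀ i k, B i k = ∑ t, v i (μ t k) := by
    intro i k
    simp only [hB]
    apply Finset.sum_image
    intro s _ t _ hst
    have hp := hμ.injective (a₁ := (s, k)) (a₂ := (t, k)) hst
    exact (Prod.ext_iff.mp hp).1
  have hperm : ∀ π : Equiv.Perm (Fin n), ∑ i, (B i (π i) - B i i) ≤ 0 := by
    intro π
    have hkey : ∀ t : Fin T, ∑ i, v i (μ t (π i)) ≤ ∑ i, v i (μ t i) := by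
      intro t
      apply hgreedy t (fun i => μ t (π i))
      · intro x y hxy
        have hp := hμ.injective (a₁ := (t, π x)) (a₂ := (t, π y)) hxy
        exact π.injective (Prod.ext_iff.mp hp).2
      · intro i
        simp only [Finset.mem_filter, Finset.mem_univ, true_and]
        intro s hs i' heq
        have hp := hμ.injective (a₁ := (s, i')) (a₂ := (t, π i)) heq
        have hst : s = t := (Prod.ext_iff.mp hp).1
        rw [hst] at hs
        exact lt_irrefl _ hs
    have h1 : ∑ i, B i (π i) ≤ ∑ i, B i i := by
      simp only [hBsum]
      calc ∑ i, ∑ t, v i (μ t (π i)) = ∑ t, ∑ i, v i (μ t (π i)) := Finset.sum_comm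
        _ ≤ ∑ t, ∑ i, v i (μ t i) := Finset.sum_le_sum (fun t _ => hkey t)
        _ = ∑ i, ∑ t, v i (μ t i) := Finset.sum_comm
    have h2 : ∑ i, (B i (π i) - B i i) = (∑ i, B i (π i)) - ∑ i, B i i :=
      Finset.sum_sub_distrib _ _
    rw [h2]
    linarith
  obtain ⟨p, hp0, hpw⟩ := potential_exists hn (fun i k => B i k - B i i)
    (fun i => by ring) hperm
  refine ⟨p, hp0, ?_⟩
  intro i k
  have hik := hpw i k
  simp only [hB] at hik ⊢
  linarith
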